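/- If every suffix in SAA entry i and every suffix in SAA entry i' (i ≠ i') is prefixed by a pattern Q, then for every entry k between i and i' in the SAA, every suffix in SAA[k] is prefixed by Q. -/
import Mathlib

private lemma cons_le_cons_iff' {α : Type*} [LinearOrder α] {a : α} {u v : List α} :
    (a :: u : List α) ≤ a :: v ↔ u ≤ v := by
  constructor
  · intro h
    rcases eq_or_lt_of_le h with h | h
    · simp_all
    · cases h with
      | cons h => exact le_of_lt h
      | rel h => exact absurd h (lt_irrefl a)
  · exact List.cons_le_cons a

private lemma between_prefix {α : Type*} [LinearOrder α] :
    ∀ (Q u v w : List α), Q <+: u → Q <+: v → u ≤ w → w ≤ v → Q <+: w := by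
  intro Q
  induction Q with
  | nil => intro _ _ _ _ _ _ _; exact List.nil_prefix
  | cons a Q ih =>
    rintro u v w ⟨u₁, rfl⟩ ⟨v₁, rfl⟩ huw hwv
    simp only [List.cons_append] at huw hwv
    obtain ⟨b, w₁, rfl⟩ : ∃ b w₁, w = b :: w₁ := by
      cases w with
      | nil =>
        exfalso
        have : (a :: (Q ++ u₁) : List α) < [] ∨ (a :: (Q ++ u₁) : List α) = [] :=
          (lt_or_eq_of_le huw).imp id id
        rcases this with h | h
        · cases h
        · cases h
      | cons b w₁ => exact ⟨b, w₁, rfl⟩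
    have hab : a = b := by
      have h1 : a ≤ b := by
        rcases eq_or_lt_of_le huw with h | h
        · injection h with h _; exact le_of_eq h
        · cases h with
          | cons _ => exact le_rfl
          | rel h => exact le_of_lt h
      have h2 : b ≤ a := by
        rcases eq_or_lt_of_le hwv with h | h
        · injection h with h _; exact le_of_eq h
        · cases h with
          | cons _ => exact le_rfl
          | rel h => exact le_of_lt h
      exact le_antisymm h1 h2
    subst hab
    rw [cons_le_cons_iff'] at huw hwv
    obtain ⟨t, rfl⟩ := ih _ _ _ ⟨u₁, rfl⟩ ⟨v₁, rfl⟩ huw hwv; exact ⟨t, rfl⟩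

theorem stmt10 {α : Type*} [LinearOrder α]
    (SAA : ℕ → Set (List α)) (Q : List α) (i i' : ℕ)
    (hsorted : ∀ k k' : ℕ, k < k' → ∀ u ∈ SAA k, ∀ v ∈ SAA k', u ≤ v)
    (hne : i ≠ i') (hii' : i ≤ i')
    (hnei : (SAA i).Nonempty) (hnei' : (SAA i').Nonempty)
    (hi : ∀ u ∈ SAA i, Q <+: u) (hi' : ∀ u ∈ SAA i', Q <+: u) :
    ∀ k, i ≤ k → k ≤ i' → ∀ w ∈ SAA k, Q <+: w := by
  intro k hik hki' w hw
  obtain ⟨u, hu⟩ := hnei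
  obtain ⟨v, hv⟩ := hnei'
  rcases eq_or_lt_of_le hik with rfl | hik
  · exact hi w hw
  rcases eq_or_lt_of_le hki' with rfl | hki'
  · exact hi' w hw
  exact between_prefix Q u v w (hi u hu) (hi' v hv)
    (hsorted i k hik u hu w hw) (hsorted k i' hki' w hw v hv)
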